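/- Define $A_5(m,n) = -\frac{(n-7)(n-2)}{n(2m+n-4)(2m+n-6)} + \frac{(m+n-1)(m+n-2)}{(m+n)^2(2m+n-2)^2} - \frac{(m+n-2)(n+8)}{n(m+n)(2m+n-2)(2m+n-4)} + \frac{m(m+n-1)(2m+2n-1)}{n(m+n)^2(2m+n-2)^2} - \frac{2m(m+n-1)}{n(m+n)(2m+n-2)(2m+n-4)}$. Then $A_5(m,n) \leq 0$ for all real $n \geq 7$ and $m \geq 0$. -/
import Mathlib

/-- The quantity `A₅(m,n)` from the proof of Theorem A is nonpositive for all real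
`n ≥ 7`, `m ≥ 0`. -/
theorem stmt14 (n m : ℝ) (hn : 7 ≤ n) (hm : 0 ≤ m) :
    -((n - 7) * (n - 2)) / (n * (2 * m + n - 4) * (2 * m + n - 6))
      + (m + n - 1) * (m + n - 2) / ((m + n) ^ 2 * (2 * m + n - 2) ^ 2)
      - (m + n - 2) * (n + 8) / (n * (m + n) * (2 * m + n - 2) * (2 * m + n - 4))
      + m * (m + n - 1) * (2 * m + 2 * n - 1) / (n * (m + n) ^ 2 * (2 * m + n - 2) ^ 2)
      - 2 * m * (m + n - 1) / (n * (m + n) * (2 * m + n - 2) * (2 * m + n - 4)) ≤ 0 := by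
  have h1 : (0:ℝ) < n := by linarith
  have h2 : (0:ℝ) < 2 * m + n - 4 := by linarith
  have h3 : (0:ℝ) < 2 * m + n - 6 := by linarith
  have h4 : (0:ℝ) < m + n := by linarith
  have h5 : (0:ℝ) < 2 * m + n - 2 := by linarith
  have ht : (0:ℝ) ≤ n - 7 := by linarith
  have hN : (240*n - 348*n^2 + 200*n^3 - 65*n^4 + 13*n^5 - 1*n^6 + 216*m - 834*m*n + 745*m*n^2 - 302*m*n^3 + 70*m*n^4 - 6*m*n^5 - 476*m^2 + 906*m^2*n - 509*m^2*n^2 + 137*m^2*n^3 - 13*m^2*n^4 + 360*m^3 - 372*m^3*n + 116*m^3*n^2 - 12*m^3*n^3 - 100*m^4 + 36*m^4*n - 4*m^4*n^2) ≤ 0 := by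
    nlinarith [mul_nonneg (pow_nonneg hm 0) (pow_nonneg ht 1), mul_nonneg (pow_nonneg hm 0) (pow_nonneg ht 2), mul_nonneg (pow_nonneg hm 0) (pow_nonneg ht 3), mul_nonneg (pow_nonneg hm 0) (pow_nonneg ht 4), mul_nonneg (pow_nonneg hm 0) (pow_nonneg ht 5), mul_nonneg (pow_nonneg hm 0) (pow_nonneg ht 6), mul_nonneg (pow_nonneg hm 1) (pow_nonneg ht 0), mul_nonneg (pow_nonneg hm 1) (pow_nonneg ht 1), mul_nonneg (pow_nonneg hm 1) (pow_nonneg ht 2), mul_nonneg (pow_nonneg hm 1) (pow_nonneg ht 3), mul_nonneg (pow_nonneg hm 1) (pow_nonneg ht 4), mul_nonneg (pow_nonneg hm 1) (pow_nonneg ht 5), mul_nonneg (pow_nonneg hm 2) (pow_nonneg ht 0), mul_nonneg (pow_nonneg hm 2) (pow_nonneg ht 1), mul_nonneg (pow_nonneg hm 2) (pow_nonneg ht 2), mul_nonneg (pow_nonneg hm 2) (pow_nonneg ht 3), mul_nonneg (pow_nonneg hm 2) (pow_nonneg ht 4), mul_nonneg (pow_nonneg hm 3) (pow_nonneg ht 0),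 mul_nonneg (pow_nonneg hm 3) (pow_nonneg ht 1), mul_nonneg (pow_nonneg hm 3) (pow_nonneg ht 2), mul_nonneg (pow_nonneg hm 3) (pow_nonneg ht 3), mul_nonneg (pow_nonneg hm 4) (pow_nonneg ht 0), mul_nonneg (pow_nonneg hm 4) (pow_nonneg ht 1), mul_nonneg (pow_nonneg hm 4) (pow_nonneg ht 2)]
  have hD : (0:ℝ) < n * (m + n)^2 * (2*m+n-2)^2 * (2*m+n-4) * (2*m+n-6) := by positivity
  have hE : -((n - 7) * (n - 2)) / (n * (2 * m + n - 4) * (2 * m + n - 6))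
      + (m + n - 1) * (m + n - 2) / ((m + n) ^ 2 * (2 * m + n - 2) ^ 2)
      - (m + n - 2) * (n + 8) / (n * (m + n) * (2 * m + n - 2) * (2 * m + n - 4))
      + m * (m + n - 1) * (2 * m + 2 * n - 1) / (n * (m + n) ^ 2 * (2 * m + n - 2) ^ 2)
      - 2 * m * (m + n - 1) / (n * (m + n) * (2 * m + n - 2) * (2 * m + n - 4))
      = (240*n - 348*n^2 + 200*n^3 - 65*n^4 + 13*n^5 - 1*n^6 + 216*m - 834*m*n + 745*m*n^2 - 302*m*n^3 + 70*m*n^4 - 6*m*n^5 - 476*m^2 + 906*m^2*n - 509*m^2*n^2 + 137*m^2*n^3 - 13*m^2*n^4 + 360*m^3 - 372*m^3*n + 116*m^3*n^2 - 12*m^3*n^3 - 100*m^4 + 36*m^4*n - 4*m^4*n^2) / (n * (m + n)^2 * (2*m+n-2)^2 * (2*m+n-4) * (2*m+n-6)) := by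
    field_simp
    ring
  rw [hE]
  exact div_nonpos_of_nonpos_of_nonneg hN hD.le
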